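/- Let G be a finite simple graph, u a vertex of G, and ℓ ≥ 0 an integer. Then for every vertex v of B'(u,ℓ), there exists a u–v path of hop-length at most ℓ all of whose vertices and edges lie in B'(u,ℓ). -/

import Mathlib

/-- The hop-ball of radius `ℓ` around `u`: vertices joined to `u` by a walk of
hop-length at most `ℓ`. -/
def hopBall {V : Type*} (G : SimpleGraph V) (u : V) (ℓ : ℕ) : Set V :=
  {v | ∃ p : G.Walk u v, p.length ≤ ℓ}

/-- A subgraph is 2-edge-connected if it is connected and remains connected after
deleting any single edge. -/
def Subgraph.TwoEdgeConnected {V : Type*} {G : SimpleGraph V} (H : G.Subgraph) : Prop :=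
  H.Connected ∧ ∀ e ∈ H.edgeSet, (H.deleteEdges {e}).Connected

/-- `B'(u, ℓ)`: the maximal 2-edge-connected subgraph of `G[B(u, ℓ)]` containing `u`,
i.e. the union of all 2-edge-connected subgraphs of the ball-induced subgraph that
contain `u`. -/
noncomputable def maxTwoEdgeConnBall {V : Type*} (G : SimpleGraph V) (u : V) (ℓ : ℕ) :
    G.Subgraph :=
  sSup {H : G.Subgraph | H.verts ⊆ hopBall G u ℓ ∧ u ∈ H.verts ∧ Subgraph.TwoEdgeConnected H}

open SimpleGraph

/-- Decompose a walk at an edge. -/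
lemma walk_decomp_at_edge {V : Type*} {G : SimpleGraph V} {u v : V} (p : G.Walk u v)
    {e : Sym2 V} (he : e ∈ p.edges) :
    ∃ (x y : V) (h : G.Adj x y) (q₁ : G.Walk u x) (q₂ : G.Walk y v),
      e = s(x, y) ∧ p = q₁.append (SimpleGraph.Walk.cons h q₂) := by
  induction p with
  | nil => simp at he
  | @cons a b c h' p' ih =>
    rw [SimpleGraph.Walk.edges_cons, List.mem_cons] at he
    rcases he with he | he
    · exact ⟨a, b, h', SimpleGraph.Walk.nil, p', he, rfl⟩
    · obtain ⟨x, y, hadj, q₁, q₂, he', hp'⟩ := ih he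
      exact ⟨x, y, hadj, SimpleGraph.Walk.cons h' q₁, q₂, he', by
        rw [SimpleGraph.Walk.cons_append, hp']⟩

lemma deleteEdges_mono_left {V : Type*} {G : SimpleGraph V} {H K : G.Subgraph}
    (h : H ≤ K) (s : Set (Sym2 V)) : H.deleteEdges s ≤ K.deleteEdges s := by
  constructor
  · simpa [SimpleGraph.Subgraph.deleteEdges_verts] using h.1
  · intro a b hab
    rw [SimpleGraph.Subgraph.deleteEdges_adj] at hab ⊢
    exact ⟨h.2 hab.1, hab.2⟩

lemma toSubgraph_le_deleteEdges {V : Type*} {G : SimpleGraph V} {a b : V}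
    (q : G.Walk a b) {K : G.Subgraph} (hq : q.toSubgraph ≤ K) {e : Sym2 V}
    (he : e ∉ q.edges) : q.toSubgraph ≤ K.deleteEdges {e} := by
  constructor
  · simpa [SimpleGraph.Subgraph.deleteEdges_verts] using hq.1
  · intro x y hxy
    rw [SimpleGraph.Subgraph.deleteEdges_adj]
    refine ⟨hq.2 hxy, ?_⟩
    intro hmem
    rw [Set.mem_singleton_iff] at hmem
    have : s(x, y) ∈ q.edges := by
      rw [← SimpleGraph.Walk.mem_edges_toSubgraph]
      exact hxy
    rw [hmem] at this
    exact he this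

lemma deleteEdges_eq_self_of_not_mem {V : Type*} {G : SimpleGraph V} {H : G.Subgraph}
    {e : Sym2 V} (he : e ∉ H.edgeSet) : H.deleteEdges {e} = H := by
  ext x y
  · simp [SimpleGraph.Subgraph.deleteEdges_verts]
  · rw [SimpleGraph.Subgraph.deleteEdges_adj]
    constructor
    · exact fun h => h.1
    · intro h
      refine ⟨h, ?_⟩
      intro hmem
      rw [Set.mem_singleton_iff] at hmem
      apply he
      rw [← hmem]
      exact (SimpleGraph.Subgraph.mem_edgeSet).2 h

/-- For every vertex `v` of `B'(u, ℓ)` there exists a `u`–`v` path of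
hop-length at most `ℓ` all of whose vertices and edges lie in `B'(u, ℓ)`. -/
theorem maxTwoEdgeConnBall_radius
    {V : Type*} [Fintype V] [DecidableEq V] (G : SimpleGraph V)
    (u : V) (ℓ : ℕ) :
    ∀ v ∈ (maxTwoEdgeConnBall G u ℓ).verts,
      ∃ p : (maxTwoEdgeConnBall G u ℓ).spanningCoe.Walk u v,
        p.length ≤ ℓ ∧ ∀ w ∈ p.support, w ∈ (maxTwoEdgeConnBall G u ℓ).verts := by
  intro v hv
  rw [maxTwoEdgeConnBall, SimpleGraph.Subgraph.verts_sSup] at hv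
  simp only [Set.mem_iUnion] at hv
  obtain ⟨H, hHmem, hvH⟩ := hv
  obtain ⟨hball, huH, hconn, h2ec⟩ := hHmem
  obtain ⟨q, hq⟩ := hball hvH
  set p := q.bypass with hpdef
  have hpath : p.IsPath := q.bypass_isPath
  have hplen : p.length ≤ ℓ := le_trans q.length_bypass_le hq
  have hsupp : ∀ w ∈ p.support, w ∈ hopBall G u ℓ := fun w hw =>
    ⟨p.takeUntil w hw, le_trans (p.length_takeUntil_le hw) hplen⟩
  set K := H ⊔ p.toSubgraph with hKdef
  have huP : u ∈ p.toSubgraph.verts := p.start_mem_verts_toSubgraph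
  have hKball : K.verts ⊆ hopBall G u ℓ := by
    intro w hw
    rcases hw with hw | hw
    · exact hball hw
    · exact hsupp w ((SimpleGraph.Walk.mem_verts_toSubgraph p).1 hw)
  have hKconn : K.Connected :=
    SimpleGraph.Subgraph.connected_sup hconn.preconnected p.toSubgraph_connected.preconnected ⟨u, huH, huP⟩
  have hKdel : ∀ e ∈ K.edgeSet, (K.deleteEdges {e}).Connected := by
    intro e he
    have hHd : (H.deleteEdges {e}).Connected := by
      by_cases heH : e ∈ H.edgeSet
      · exact h2ec e heH
      · rw [deleteEdges_eq_self_of_not_mem heH]; exact hconn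
    have hHdle : H.deleteEdges {e} ≤ K.deleteEdges {e} :=
      deleteEdges_mono_left le_sup_left {e}
    have huHd : u ∈ (H.deleteEdges {e}).verts := by
      rw [SimpleGraph.Subgraph.deleteEdges_verts]; exact huH
    have hvHd : v ∈ (H.deleteEdges {e}).verts := by
      rw [SimpleGraph.Subgraph.deleteEdges_verts]; exact hvH
    by_cases hep : e ∈ p.edges
    · obtain ⟨x, y, hadj, q₁, q₂, he', hpd⟩ := walk_decomp_at_edge p hep
      have hnodup : p.edges.Nodup := hpath.isTrail.edges_nodup
      rw [hpd, SimpleGraph.Walk.edges_append, SimpleGraph.Walk.edges_cons,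
        List.nodup_append] at hnodup
      have he1 : e ∉ q₁.edges := by
        intro h
        exact hnodup.2.2 e h e (by rw [he']; exact List.mem_cons_self) rfl
      have he2 : e ∉ q₂.edges := by
        intro h
        rw [List.nodup_cons] at hnodup
        exact hnodup.2.1.1 (he' ▸ h)
      have hPle : p.toSubgraph ≤ K := le_sup_right
      have hq1P : q₁.toSubgraph ≤ p.toSubgraph := by
        rw [hpd, SimpleGraph.Walk.toSubgraph_append]; exact le_sup_left
      have hq2P : q₂.toSubgraph ≤ p.toSubgraph := by
        rw [hpd, SimpleGraph.Walk.toSubgraph_append]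
        exact le_trans le_sup_right le_sup_right
      have hq1le : q₁.toSubgraph ≤ K.deleteEdges {e} :=
        toSubgraph_le_deleteEdges q₁ (le_trans hq1P hPle) he1
      have hq2le : q₂.toSubgraph ≤ K.deleteEdges {e} :=
        toSubgraph_le_deleteEdges q₂ (le_trans hq2P hPle) he2
      have hSconn : ((H.deleteEdges {e} ⊔ q₁.toSubgraph) ⊔ q₂.toSubgraph).Connected := by
        refine SimpleGraph.Subgraph.connected_sup ?_ q₂.toSubgraph_connected.preconnected
          ⟨v, Or.inl hvHd, q₂.end_mem_verts_toSubgraph⟩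
        exact (SimpleGraph.Subgraph.connected_sup hHd.preconnected q₁.toSubgraph_connected.preconnected ⟨u, huHd, q₁.start_mem_verts_toSubgraph⟩).preconnected
      refine hSconn.mono (sup_le (sup_le hHdle hq1le) hq2le) ?_
      ext w
      simp only [SimpleGraph.Subgraph.verts_sup, SimpleGraph.Subgraph.deleteEdges_verts,
        SimpleGraph.Walk.verts_toSubgraph, Set.mem_union, Set.mem_setOf_eq, hKdef,
        hpd, SimpleGraph.Walk.support_append, SimpleGraph.Walk.support_cons,
        List.tail_cons, List.mem_append]
      tauto
    · have heH : e ∈ H.edgeSet := by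
        rw [SimpleGraph.Subgraph.edgeSet_sup] at he
        rcases he with he | he
        · exact he
        · rw [SimpleGraph.Walk.edgeSet_toSubgraph] at he
          exact absurd he hep
      have hPle : p.toSubgraph ≤ K.deleteEdges {e} :=
        toSubgraph_le_deleteEdges p le_sup_right hep
      have hSconn : (H.deleteEdges {e} ⊔ p.toSubgraph).Connected :=
        SimpleGraph.Subgraph.connected_sup hHd.preconnected p.toSubgraph_connected.preconnected ⟨u, huHd, huP⟩
      refine hSconn.mono (sup_le hHdle hPle) ?_
      simp [SimpleGraph.Subgraph.verts_sup, SimpleGraph.Subgraph.deleteEdges_verts, hKdef]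
  have hKmem : K ∈ {H : G.Subgraph |
      H.verts ⊆ hopBall G u ℓ ∧ u ∈ H.verts ∧ Subgraph.TwoEdgeConnected H} :=
    ⟨hKball, Or.inl huH, hKconn, hKdel⟩
  have hKle : K ≤ maxTwoEdgeConnBall G u ℓ := le_sSup hKmem
  have hPle : p.toSubgraph ≤ maxTwoEdgeConnBall G u ℓ := le_trans le_sup_right hKle
  refine ⟨p.transfer (maxTwoEdgeConnBall G u ℓ).spanningCoe (fun e he => ?_), ?_, ?_⟩
  · have : e ∈ p.toSubgraph.edgeSet := by
      rw [SimpleGraph.Walk.edgeSet_toSubgraph]; exact SimpleGraph.Walk.mem_edgeSet.2 he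
    exact (SimpleGraph.Subgraph.edgeSet_mono hPle :
      p.toSubgraph.edgeSet ⊆ (maxTwoEdgeConnBall G u ℓ).edgeSet) this
  · exact (SimpleGraph.Walk.length_transfer _ _).le.trans hplen
  · intro w hw
    replace hw := Eq.mp (congrArg (w ∈ ·) (SimpleGraph.Walk.support_transfer _ _)) hw
    exact hPle.1 ((SimpleGraph.Walk.mem_verts_toSubgraph p).2 hw)
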